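/- arXiv:1609.00039 — 3 statements merged into one kernel-verified Lean document; each statement's English description precedes it below -/
import Mathlib

section
/- Let F : ℝ² → ℝ² be a bijection written in null coordinates as F(u,v) = (σ(u,v), τ(u,v)), and suppose there exist functions α, β, γ, δ : ℝ → ℝ with σ(u,v) = α(u) + β(v) and τ(u,v) = γ(u) + δ(v), such that moreover σ² and τ² also split additively: σ(u,v)² = a(u) + b(v) and τ(u,v)² = c(u) + d(v) for some functions a, b, c, d. Then either (σ depends only on u and τ depends only on v) or (σ depends only on v and τ depends only on u); i.e., there exist φ, ψ : ℝ → ℝ with either F(u,v) = (φ(u), ψ(v)) for all u, v, or F(u,v) = (φ(v), ψ(u)) for all u, v. -/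
lemma split_aux (α β a b : ℝ → ℝ) (h : ∀ u v : ℝ, (α u + β v) ^ 2 = a u + b v) :
    (∀ u : ℝ, α u = α 0) ∨ (∀ v : ℝ, β v = β 0) := by
  have key : ∀ u v : ℝ, (α u - α 0) * (β v - β 0) = 0 := by
    intro u v
    have e1 := h u v
    have e2 := h 0 v
    have e3 := h u 0
    have e4 := h 0 0
    nlinarith [e1, e2, e3, e4]
  by_cases hα : ∀ u : ℝ, α u = α 0
  · exact Or.inl hα
  · push_neg at hα
    obtain ⟨u, hu⟩ := hα
    right
    intro v
    have := key u v
    rcases mul_eq_zero.mp this with h' | h'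
    · exact absurd (by linarith) hu
    · linarith

theorem stmt_9 (F : ℝ × ℝ → ℝ × ℝ) (hF : Function.Bijective F)
    (σ τ : ℝ → ℝ → ℝ)
    (hστ : ∀ u v : ℝ, F (u, v) = (σ u v, τ u v))
    (α β γ δ : ℝ → ℝ)
    (h1 : ∀ u v : ℝ, σ u v = α u + β v)
    (h2 : ∀ u v : ℝ, τ u v = γ u + δ v)
    (a b c d : ℝ → ℝ)
    (h3 : ∀ u v : ℝ, (σ u v) ^ 2 = a u + b v)
    (h4 : ∀ u v : ℝ, (τ u v) ^ 2 = c u + d v) :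
    ∃ φ ψ : ℝ → ℝ,
      (∀ u v : ℝ, F (u, v) = (φ u, ψ v)) ∨
      (∀ u v : ℝ, F (u, v) = (φ v, ψ u)) := by
  have hσ := split_aux α β a b (fun u v => by rw [← h1 u v]; exact h3 u v)
  have hτ := split_aux γ δ c d (fun u v => by rw [← h2 u v]; exact h4 u v)
  rcases hσ with hα | hβ
  · rcases hτ with hγ | hδ
    · -- both depend only on v: contradicts injectivity
      exfalso
      have : F (0, 0) = F (1, 0) := by
        rw [hστ, hστ, h1, h1, h2, h2, hα 1, hγ 1]
      have := hF.1 this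
      rw [Prod.ext_iff] at this; norm_num at this
    · -- σ depends on v, τ depends on u
      refine ⟨fun v => σ 0 v, fun u => τ u 0, Or.inr ?_⟩
      intro u v
      rw [hστ, h1, h2, hα u, hδ v, ← h1 0 v, ← h2 u 0]
  · rcases hτ with hγ | hδ
    · refine ⟨fun u => σ u 0, fun v => τ 0 v, Or.inl ?_⟩
      intro u v
      rw [hστ, h1, h2, hβ v, hγ u, ← h1 u 0, ← h2 0 v]
    · exfalso
      have : F (0, 0) = F (0, 1) := by
        rw [hστ, hστ, h1, h1, h2, h2, hβ 1, hδ 1]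
      have := hF.1 this
      rw [Prod.ext_iff] at this; norm_num at this
end

section
/- Every order isomorphism F of (ℝ², ≤×≤) (the product order) onto itself either splits coordinatewise, F(u,v) = (φ(u), ψ(v)) with φ, ψ order isomorphisms of ℝ, or swaps coordinates, F(u,v) = (φ(v), ψ(u)) with φ, ψ order isomorphisms of ℝ. -/
lemma split_key (h : ℝ × ℝ → ℝ)
    (hs : ∀ p q : ℝ × ℝ, h (p ⊔ q) = h p ⊔ h q)
    (hi : ∀ p q : ℝ × ℝ, h (p ⊓ q) = h p ⊓ h q) :
    (∀ u v v' : ℝ, h (u, v) = h (u, v')) ∨ (∀ u u' v : ℝ, h (u, v) = h (u', v)) := by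
  have mono : ∀ p q : ℝ × ℝ, p ≤ q → h p ≤ h q := by
    intro p q hpq
    have := hs p q
    rw [sup_eq_right.2 hpq] at this
    rw [this]; exact le_sup_left
  have rect : ∀ u u' v v' : ℝ, u ≤ u' → v ≤ v' →
      h (u', v') = h (u, v') ⊔ h (u', v) ∧ h (u, v) = h (u, v') ⊓ h (u', v) := by
    intro u u' v v' hu hv
    have e1 : ((u, v') : ℝ × ℝ) ⊔ (u', v) = (u', v') := by
      ext <;> simp [sup_eq_right.2 hu, sup_eq_left.2 hv]
    have e2 : ((u, v') : ℝ × ℝ) ⊓ (u', v) = (u, v) := by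
      ext <;> simp [inf_eq_left.2 hu, inf_eq_right.2 hv]
    constructor
    · have := hs (u, v') (u', v); rwa [e1] at this
    · have := hi (u, v') (u', v); rwa [e2] at this
  by_cases hdep : ∀ u v v' : ℝ, h (u, v) = h (u, v')
  · exact Or.inl hdep
  · right
    push_neg at hdep
    obtain ⟨u0, v0, v0', hne⟩ := hdep
    obtain ⟨v1, v2, hv12, hlt⟩ : ∃ v1 v2 : ℝ, v1 ≤ v2 ∧ h (u0, v1) < h (u0, v2) := by
      rcases le_total v0 v0' with hc | hc
      · exact ⟨v0, v0', hc,
          lt_of_le_of_ne (mono _ _ (by simp [Prod.le_def, hc])) hne⟩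
      · exact ⟨v0', v0, hc,
          lt_of_le_of_ne (mono _ _ (by simp [Prod.le_def, hc])) (Ne.symm hne)⟩
    have const2 : ∀ x : ℝ, h (x, v2) = h (u0, v2) := by
      intro x
      rcases le_total u0 x with hc | hc
      · obtain ⟨ha, hb⟩ := rect u0 x v1 v2 hc hv12
        rcases le_total (h (u0, v2)) (h (x, v1)) with hab | hab
        · rw [inf_eq_left.2 hab] at hb
          exact absurd hlt (by rw [hb]; exact lt_irrefl _)
        · rw [ha, sup_eq_left.2 hab]
      · obtain ⟨ha, hb⟩ := rect x u0 v1 v2 hc hv12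
        rcases le_total (h (x, v2)) (h (u0, v1)) with hab | hab
        · rw [sup_eq_right.2 hab] at ha
          exact absurd hlt (by rw [ha]; exact lt_irrefl _)
        · rw [ha, sup_eq_left.2 hab]
    intro u u' v
    suffices H : ∀ a b : ℝ, a ≤ b → h (a, v) = h (b, v) by
      rcases le_total u u' with hc | hc
      exacts [H u u' hc, (H u' u hc).symm]
    intro a b hab
    rcases le_total v v2 with hc | hc
    · obtain ⟨ha, hb⟩ := rect a b v v2 hab hc
      rcases le_total (h (a, v2)) (h (b, v)) with hab2 | hab2
      · calc h (a, v) = h (a, v2) := by rw [hb, inf_eq_left.2 hab2]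
          _ = h (b, v2) := by rw [const2 a, const2 b]
          _ = h (b, v) := by rw [ha, sup_eq_right.2 hab2]
      · rw [hb, inf_eq_right.2 hab2]
    · obtain ⟨ha, hb⟩ := rect a b v2 v hab hc
      rcases le_total (h (a, v)) (h (b, v2)) with hab2 | hab2
      · calc h (a, v) = h (a, v2) := by rw [hb, inf_eq_left.2 hab2]
          _ = h (b, v2) := by rw [const2 a, const2 b]
          _ = h (b, v) := by rw [ha, sup_eq_right.2 hab2]
      · rw [ha, sup_eq_left.2 hab2]

lemma build_props (F : ℝ × ℝ → ℝ × ℝ) (hF : Function.Bijective F)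
    (hmono : ∀ p q : ℝ × ℝ, p ≤ q ↔ F p ≤ F q)
    (φ ψ : ℝ → ℝ) (heq : ∀ u v : ℝ, F (u, v) = (φ u, ψ v)) :
    StrictMono φ ∧ StrictMono ψ ∧ Function.Bijective φ ∧ Function.Bijective ψ := by
  have injφ : Function.Injective φ := by
    intro a b hab
    have : F (a, 0) = F (b, 0) := by rw [heq, heq, hab]
    exact congrArg Prod.fst (hF.1 this)
  have injψ : Function.Injective ψ := by
    intro a b hab
    have : F (0, a) = F (0, b) := by rw [heq, heq, hab]
    exact congrArg Prod.snd (hF.1 this)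
  have monφ : Monotone φ := by
    intro a b hab
    have : F (a, 0) ≤ F (b, 0) := (hmono _ _).1 (by simp [Prod.le_def, hab])
    rw [heq, heq] at this
    exact this.1
  have monψ : Monotone ψ := by
    intro a b hab
    have : F (0, a) ≤ F (0, b) := (hmono _ _).1 (by simp [Prod.le_def, hab])
    rw [heq, heq] at this
    exact this.2
  have surφ : Function.Surjective φ := by
    intro y
    obtain ⟨⟨u, v⟩, hp⟩ := hF.2 (y, ψ 0)
    rw [heq] at hp
    exact ⟨u, congrArg Prod.fst hp⟩
  have surψ : Function.Surjective ψ := by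
    intro y
    obtain ⟨⟨u, v⟩, hp⟩ := hF.2 (φ 0, y)
    rw [heq] at hp
    exact ⟨v, congrArg Prod.snd hp⟩
  exact ⟨monφ.strictMono_of_injective injφ, monψ.strictMono_of_injective injψ,
    ⟨injφ, surφ⟩, ⟨injψ, surψ⟩⟩

theorem stmt_13 (F : ℝ × ℝ → ℝ × ℝ) (hF : Function.Bijective F)
    (hord : ∀ p q : ℝ × ℝ, (p.1 ≤ q.1 ∧ p.2 ≤ q.2) ↔
      ((F p).1 ≤ (F q).1 ∧ (F p).2 ≤ (F q).2)) :
    ∃ φ ψ : ℝ → ℝ, StrictMono φ ∧ StrictMono ψ ∧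
      Function.Bijective φ ∧ Function.Bijective ψ ∧
      ((∀ u v : ℝ, F (u, v) = (φ u, ψ v)) ∨
       (∀ u v : ℝ, F (u, v) = (φ v, ψ u))) := by
  have hmono : ∀ p q : ℝ × ℝ, p ≤ q ↔ F p ≤ F q := by
    intro p q
    rw [Prod.le_def, Prod.le_def]
    exact hord p q
  have hsup : ∀ p q : ℝ × ℝ, F (p ⊔ q) = F p ⊔ F q := by
    intro p q
    apply le_antisymm
    · obtain ⟨r, hr⟩ := hF.2 (F p ⊔ F q)
      have hp : p ≤ r := (hmono p r).2 (hr ▸ le_sup_left)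
      have hq : q ≤ r := (hmono q r).2 (hr ▸ le_sup_right)
      have := (hmono (p ⊔ q) r).1 (sup_le hp hq)
      rwa [hr] at this
    · exact sup_le ((hmono p (p ⊔ q)).1 le_sup_left) ((hmono q (p ⊔ q)).1 le_sup_right)
  have hinf : ∀ p q : ℝ × ℝ, F (p ⊓ q) = F p ⊓ F q := by
    intro p q
    apply le_antisymm
    · exact le_inf ((hmono (p ⊓ q) p).1 inf_le_left) ((hmono (p ⊓ q) q).1 inf_le_right)
    · obtain ⟨r, hr⟩ := hF.2 (F p ⊓ F q)
      have hp : r ≤ p := (hmono r p).2 (hr ▸ inf_le_left)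
      have hq : r ≤ q := (hmono r q).2 (hr ▸ inf_le_right)
      have := (hmono r (p ⊓ q)).1 (le_inf hp hq)
      rwa [hr] at this
  have keyf := split_key (fun p => (F p).1)
    (fun p q => by simp only [hsup]; rfl) (fun p q => by simp only [hinf]; rfl)
  have keyg := split_key (fun p => (F p).2)
    (fun p q => by simp only [hsup]; rfl) (fun p q => by simp only [hinf]; rfl)
  rcases keyf with hf | hf <;> rcases keyg with hg | hg
  · -- f depends only on 1st, g only on 1st: contradiction with injectivity
    exfalso
    have : F (0, 0) = F (0, 1) := by
      ext
      · exact hf 0 0 1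
      · exact hg 0 0 1
    have := hF.1 this
    simpa using congrArg Prod.snd this
  · -- split case
    refine ⟨fun u => (F (u, 0)).1, fun v => (F (0, v)).2, ?_⟩
    have heq : ∀ u v : ℝ, F (u, v) = ((F (u, 0)).1, (F (0, v)).2) := by
      intro u v
      ext
      · exact hf u v 0
      · exact hg u 0 v
    obtain ⟨h1, h2, h3, h4⟩ := build_props F hF hmono _ _ heq
    exact ⟨h1, h2, h3, h4, Or.inl heq⟩
  · -- swap case: f depends only on 2nd, g only on 1st
    refine ⟨fun v => (F (0, v)).1, fun u => (F (u, 0)).2, ?_⟩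
    have heq : ∀ u v : ℝ, F (u, v) = ((F (0, v)).1, (F (u, 0)).2) := by
      intro u v
      ext
      · exact hf u 0 v
      · exact hg u v 0
    set G : ℝ × ℝ → ℝ × ℝ := fun p => F (p.2, p.1) with hG
    have hGbij : Function.Bijective G := by
      constructor
      · intro a b hab
        have h2 := hF.1 hab
        exact Prod.ext (congrArg Prod.snd h2) (congrArg Prod.fst h2)
      · intro y
        obtain ⟨p, hp⟩ := hF.2 y
        exact ⟨(p.2, p.1), by simpa using hp⟩
    have hGmono : ∀ p q : ℝ × ℝ, p ≤ q ↔ G p ≤ G q := by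
      intro p q
      constructor
      · intro hpq
        exact (hmono (p.2, p.1) (q.2, q.1)).1
          (by rw [Prod.le_def] at hpq ⊢; exact ⟨hpq.2, hpq.1⟩)
      · intro hpq
        have := (hmono (p.2, p.1) (q.2, q.1)).2 hpq
        rw [Prod.le_def] at this ⊢
        exact ⟨this.2, this.1⟩
    have hGeq : ∀ u v : ℝ, G (u, v) = ((F (0, u)).1, (F (v, 0)).2) := by
      intro u v
      exact heq v u
    obtain ⟨h1, h2, h3, h4⟩ := build_props G hGbij hGmono _ _ hGeq
    exact ⟨h1, h2, h3, h4, Or.inr heq⟩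
  · -- f depends only on 2nd, g only on 2nd: contradiction
    exfalso
    have : F (0, 0) = F (1, 0) := by
      ext
      · exact hf 0 1 0
      · exact hg 0 1 0
    have := hF.1 this
    simpa using congrArg Prod.fst this
end

section
/- Two-dimensional Minkowski spacetime is strongly causal; consequently, every causal isomorphism F : ℝ²₁ → ℝ²₁ is a homeomorphism. -/
open Set Filter Topology

/-- Componentwise strict inequality is order-theoretically definable in ℝ × ℝ. -/
private lemma slt_iff (a p : ℝ × ℝ) :
    (a.1 < p.1 ∧ a.2 < p.2) ↔
      a ≤ p ∧ ∃ u v : ℝ × ℝ, a ≤ u ∧ u ≤ p ∧ a ≤ v ∧ v ≤ p ∧ ¬ u ≤ v ∧ ¬ v ≤ u := by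
  constructor
  · rintro ⟨h1, h2⟩
    refine ⟨⟨h1.le, h2.le⟩, ((a.1 + p.1) / 2, a.2), (a.1, (a.2 + p.2) / 2), ?_, ?_, ?_, ?_, ?_, ?_⟩
    · exact ⟨by linarith, le_rfl⟩
    · exact ⟨by linarith, h2.le⟩
    · exact ⟨le_rfl, by linarith⟩
    · exact ⟨h1.le, by linarith⟩
    · rw [Prod.le_def]; push_neg; intro h; exfalso; linarith [h]
    · rw [Prod.le_def]; push_neg; intro _; simp only; linarith
  · rintro ⟨hle, u, v, hau, hup, hav, hvp, huv, hvu⟩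
    constructor
    · rcases lt_or_eq_of_le hle.1 with h | h
      · exact h
      · exfalso
        have hu1 : u.1 = a.1 := le_antisymm (h ▸ hup.1) hau.1
        have hv1 : v.1 = a.1 := le_antisymm (h ▸ hvp.1) hav.1
        rcases le_total u.2 v.2 with h2 | h2
        · exact huv ⟨hu1.trans hv1.symm |>.le, h2⟩
        · exact hvu ⟨hv1.trans hu1.symm |>.le, h2⟩
    · rcases lt_or_eq_of_le hle.2 with h | h
      · exact h
      · exfalso
        have hu2 : u.2 = a.2 := le_antisymm (h ▸ hup.2) hau.2
        have hv2 : v.2 = a.2 := le_antisymm (h ▸ hvp.2) hav.2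
        rcases le_total u.1 v.1 with h1 | h1
        · exact huv ⟨h1, hu2.trans hv2.symm |>.le⟩
        · exact hvu ⟨h1, hv2.trans hu2.symm |>.le⟩

private lemma orderIso_slt (e : (ℝ × ℝ) ≃o (ℝ × ℝ)) {a p : ℝ × ℝ}
    (h : a.1 < p.1 ∧ a.2 < p.2) : (e a).1 < (e p).1 ∧ (e a).2 < (e p).2 := by
  rw [slt_iff] at h ⊢
  obtain ⟨hle, u, v, hau, hup, hav, hvp, huv, hvu⟩ := h
  refine ⟨e.le_iff_le.2 hle, e u, e v, e.le_iff_le.2 hau, e.le_iff_le.2 hup,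
    e.le_iff_le.2 hav, e.le_iff_le.2 hvp, fun h => huv (e.le_iff_le.1 h),
    fun h => hvu (e.le_iff_le.1 h)⟩

private lemma orderIso_continuous (e : (ℝ × ℝ) ≃o (ℝ × ℝ)) : Continuous e := by
  rw [continuous_iff_continuousAt]
  intro p s hs
  rw [Filter.mem_map]
  have hbasis : (𝓝 (e p)).HasBasis (fun ε : ℝ => 0 < ε)
      (fun ε => Icc ((e p).1 - ε) ((e p).1 + ε) ×ˢ Icc ((e p).2 - ε) ((e p).2 + ε)) := by
    rw [nhds_prod_eq]
    exact (nhds_basis_Icc_pos (e p).1).prod_same_index_mono (nhds_basis_Icc_pos (e p).2)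
      (fun _ _ _ _ h => Icc_subset_Icc (by linarith) (by linarith))
      (fun _ _ _ _ h => Icc_subset_Icc (by linarith) (by linarith))
  obtain ⟨ε, hε, hsub⟩ := hbasis.mem_iff.1 hs
  have hIcc : Icc (((e p).1 - ε, (e p).2 - ε) : ℝ × ℝ) ((e p).1 + ε, (e p).2 + ε) ⊆ s := by
    rw [← Icc_prod_Icc]; exact hsub
  have ha : ((e p).1 - ε, (e p).2 - ε).1 < (e p).1 ∧ ((e p).1 - ε, (e p).2 - ε).2 < (e p).2 :=
    ⟨by simp; linarith, by simp; linarith⟩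
  have hb : (e p).1 < ((e p).1 + ε, (e p).2 + ε).1 ∧ (e p).2 < ((e p).1 + ε, (e p).2 + ε).2 :=
    ⟨by simp; linarith, by simp; linarith⟩
  have ha' := orderIso_slt e.symm ha
  have hb' := orderIso_slt e.symm hb
  rw [e.symm_apply_apply] at ha' hb'
  set a : ℝ × ℝ := ((e p).1 - ε, (e p).2 - ε)
  set b : ℝ × ℝ := ((e p).1 + ε, (e p).2 + ε)
  have hpre : e ⁻¹' Icc a b = Icc (e.symm a) (e.symm b) := by
    ext x
    simp only [mem_preimage, mem_Icc]
    constructor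
    · rintro ⟨h1, h2⟩
      rw [← e.apply_symm_apply a] at h1
      rw [← e.apply_symm_apply b] at h2
      exact ⟨e.le_iff_le.1 h1, e.le_iff_le.1 h2⟩
    · rintro ⟨h1, h2⟩
      have h1' := e.le_iff_le.2 h1
      have h2' := e.le_iff_le.2 h2
      rw [e.apply_symm_apply] at h1' h2'
      exact ⟨h1', h2'⟩
  have hmem : Icc (e.symm a) (e.symm b) ∈ 𝓝 p := by
    have hopen : IsOpen (Ioo (e.symm a).1 (e.symm b).1 ×ˢ Ioo (e.symm a).2 (e.symm b).2) :=
      isOpen_Ioo.prod isOpen_Ioo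
    refine Filter.mem_of_superset (hopen.mem_nhds ?_) ?_
    · exact ⟨⟨ha'.1, hb'.1⟩, ⟨ha'.2, hb'.2⟩⟩
    · rintro x ⟨⟨h1, h2⟩, h3, h4⟩
      exact ⟨⟨h1.le, h3.le⟩, ⟨h2.le, h4.le⟩⟩
  rw [← hpre] at hmem
  exact Filter.mem_of_superset hmem (fun x hx => hIcc hx)

theorem stmt_18 (F : ℝ × ℝ → ℝ × ℝ) (hF : Function.Bijective F)
    (hord : ∀ p q : ℝ × ℝ, (p.1 ≤ q.1 ∧ p.2 ≤ q.2) ↔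
      ((F p).1 ≤ (F q).1 ∧ (F p).2 ≤ (F q).2)) :
    ∃ e : (ℝ × ℝ) ≃ₜ (ℝ × ℝ), ∀ p, e p = F p := by
  let e : (ℝ × ℝ) ≃o (ℝ × ℝ) :=
    { toEquiv := Equiv.ofBijective F hF
      map_rel_iff' := by
        intro p q
        simp only [Equiv.ofBijective_apply]
        rw [Prod.le_def, Prod.le_def]
        exact (hord p q).symm }
  refine ⟨{ toEquiv := e.toEquiv
            continuous_toFun := orderIso_continuous e
            continuous_invFun := orderIso_continuous e.symm }, fun p => rfl⟩
end
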